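/- For any rational number r = [m₁,…,m_k] with 0 < r ≤ 1, the cyclic S-sequence CS(r) decomposes as ⟨⟨ S₁, S₂, S₁, S₂ ⟩⟩ where each Sᵢ is a palindromic (symmetric) finite sequence, each Sᵢ occurs exactly twice in CS(r), S₁ begins and ends with m₁+1, and S₂ begins and ends with m₁ (with S₁ empty when k = 1). -/

import Mathlib

/-- A letter in the free group on two generators `a = 0`, `b = 1`:
the generator together with the exponent sign (`true` = exponent `+1`). -/
abbrev Letter := Fin 2 × Bool

/-- A word in the generators `a±1, b±1`. -/
abbrev Word := List Letter

/-- Continued fraction `[m₁,…,m_k] = 1/(m₁ + 1/(m₂ + ⋯ + 1/m_k))`. -/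
def cf : List ℕ → ℚ
  | [] => 0
  | m :: rest => 1 / (m + cf rest)

/-- `ε_i = (-1)^⌊iq/p⌋`. -/
def eps (p q i : ℕ) : ℤ := (-1) ^ (i * q / p)

/-- The word `û_{q/p} = b^{ε₁} a^{ε₂} b^{ε₃} ⋯` (of length `p-1`) as a list of letters. -/
def hatList (p q : ℕ) : Word :=
  (List.range (p - 1)).map (fun j =>
    ((if (j + 1) % 2 = 1 then (1 : Fin 2) else 0), decide ((((j + 1) * q) / p) % 2 = 0)))

/-- The formal inverse of a word. -/
def invWord (w : Word) : Word := (w.map (fun x => (x.1, !x.2))).reverse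

/-- The 2-bridge relator word `u_{q/p}`: `a·û·b^{(-1)^q}·û⁻¹` for `p` odd, and
`a·û·a⁻¹·û⁻¹` for `p` even. -/
def uList (p q : ℕ) : Word :=
  ((0 : Fin 2), true) :: (hatList p q ++
    (if p % 2 = 1 then [((1 : Fin 2), decide (q % 2 = 0))] else [((0 : Fin 2), false)]) ++
    invWord (hatList p q))

/-- The relator word `u_r` of slope `r = q/p` (in lowest terms). -/
def slopeWord (r : ℚ) : Word := uList r.den r.num.toNat

/-- The slopes `r_0 = [4,3,3]`, `r_i = [4,2,(i-1)⟨3⟩,4,3]` for `i ≥ 1`. -/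
def rSlope : ℕ → ℚ
  | 0 => cf [4, 3, 3]
  | i + 1 => cf ([4, 2] ++ List.replicate i 3 ++ [4, 3])

/-- Run-lengths of a list of signs (auxiliary). -/
def runsAux : Bool → ℕ → List Bool → List ℕ
  | _, n, [] => [n]
  | s, n, x :: xs => if x = s then runsAux s (n + 1) xs else n :: runsAux x 1 xs

/-- The S-sequence of a word: the lengths of its maximal positive/negative blocks. -/
def Sseq (w : Word) : List ℕ :=
  match w.map Prod.snd with
  | [] => []
  | s :: xs => runsAux s 1 xs

/-- A word is reduced: no adjacent mutually inverse letters. -/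
def Reduced (w : Word) : Prop :=
  List.Chain' (fun u v => ¬(u.1 = v.1 ∧ u.2 ≠ v.2)) w

/-- A word is alternating: adjacent letters use different generators. -/
def Alternating (w : Word) : Prop := List.Chain' (fun u v => u.1 ≠ v.1) w

/-- Cyclically reduced: reduced including the wrap-around pair. -/
def CyclicallyReduced (w : Word) : Prop :=
  List.Chain' (fun u v => ¬(u.1 = v.1 ∧ u.2 ≠ v.2)) (w ++ w)

/-- Cyclically alternating: alternating including the wrap-around pair. -/
def CyclicallyAlternating (w : Word) : Prop :=
  List.Chain' (fun u v => u.1 ≠ v.1) (w ++ w)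

/-- The word starts at a block boundary of the cyclic word: either all signs agree,
or the first and last signs differ. -/
def StartsAtBoundary (w : Word) : Prop :=
  (∀ x ∈ w, ∀ y ∈ w, x.2 = y.2) ∨ (∀ x ∈ w.head?, ∀ y ∈ w.getLast?, x.2 ≠ y.2)

/-- `L` is a linear representative of the cyclic S-sequence `CS(w)`:
the S-sequence of some rotation of `w` starting at a block boundary. -/
def IsCSRep (w : Word) (L : List ℕ) : Prop :=
  ∃ n, StartsAtBoundary (w.rotate n) ∧ Sseq (w.rotate n) = L

/-- From a linear representative `L = (m+1, t₁⟨m⟩, m+1, t₂⟨m⟩, …)` of a CS-sequence,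
extract the CT-sequence `(t₁, t₂, …)` of run-lengths of `m`'s. -/
def ctOf (m : ℕ) (L : List ℕ) : List ℕ := ((L.splitOn (m + 1)).drop 1).map List.length

/-- The cyclic sequence represented by `L` contains `pat` as a contiguous subsequence. -/
def CyclicContains (L pat : List ℕ) : Prop := ∃ k, pat.isPrefixOf (L.rotate k)

/-- The number of (cyclic) occurrences of `pat` as a contiguous subsequence of
the cyclic sequence represented by `L`. -/
def cyclicCount (pat L : List ℕ) : ℕ :=
  ((List.range L.length).filter (fun k => pat.isPrefixOf (L.rotate k))).length

/-- `⟨⟨S₁, S₂, S₁, S₂⟩⟩` is the symmetric decomposition of the cyclic S-sequence of `w`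
(for a slope whose continued fraction starts with `m`): each `Sᵢ` is a palindrome,
`S₁` begins and ends with `m+1`, and `S₂` begins and ends with `m`. -/
def IsSymmDecomp (w : Word) (m : ℕ) (S1 S2 : List ℕ) : Prop :=
  IsCSRep w (S1 ++ S2 ++ S1 ++ S2) ∧ S1.reverse = S1 ∧ S2.reverse = S2 ∧
  (∀ x ∈ S1.head?, x = m + 1) ∧ (∀ x ∈ S1.getLast?, x = m + 1) ∧
  S2.head? = some m ∧ S2.getLast? = some m

/-- Expand a sequence of block lengths into the corresponding list of signs,
blocks alternating in sign starting with `s`. -/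
def signList : Bool → List ℕ → List Bool
  | _, [] => []
  | s, n :: rest => List.replicate n s ++ signList (!s) rest

open Fin.NatCast in
/-- The alternating word with initial generator `g0`, initial sign `s0`,
and S-sequence `S`. -/
def altWord (g0 : Fin 2) (s0 : Bool) (S : List ℕ) : Word :=
  (List.range (signList s0 S).length).zipWith (fun k s => ((g0 + (k : Fin 2)), s))
    (signList s0 S)

/-- The product `w * w'` is freely reduced without cancellation at the junction. -/
def NoCancel (w w' : Word) : Prop :=
  ∀ x ∈ w.getLast?, ∀ y ∈ w'.head?, ¬(x.1 = y.1 ∧ x.2 ≠ y.2)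

/-- The word `X`: alternating, starting with `a`, with S-sequence `(4,4,4,5,4,4)`
(it ends with `a⁻¹`). -/
def Xword : Word := altWord 0 true [4, 4, 4, 5, 4, 4]

/-- The endomorphism of `F(a,b)` with `a ↦ X⁻¹`, `b ↦ b⁻¹`. -/
def fmap : FreeGroup (Fin 2) →* FreeGroup (Fin 2) :=
  FreeGroup.lift (fun i => if i = 0 then (FreeGroup.mk Xword)⁻¹ else (FreeGroup.of 1)⁻¹)

/-- The set of relators `{u_{r_i} : i ≥ 0}`. -/
def relsG : Set (FreeGroup (Fin 2)) := {x | ∃ i, x = FreeGroup.mk (slopeWord (rSlope i))}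

/-- The symmetrized set generated by the relators `u_{r_i}`: all cyclic permutations
of the `u_{r_i}` and of their inverses. -/
def Rset : Set Word :=
  {w | ∃ i n, w = (slopeWord (rSlope i)).rotate n ∨
      w = (invWord (slopeWord (rSlope i))).rotate n}

def csf (q s x : ℕ) : ℕ := (x * s + q - 1) / q
def cbit (q s v : ℕ) : ℕ := if (v * s) % q = 0 ∨ q - s < (v * s) % q then 1 else 0
def stf (p q v : ℕ) : ℕ := (v * p + q - 1) / q
def dfn (p q v : ℕ) : ℕ := stf p q (v+1) - stf p q v

lemma cs_eval {q s : ℕ} (hq : 0 < q) {x T R : ℕ} (h : x * s = q * T + R) (hR : R < q) :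
    csf q s x = T + if R = 0 then 0 else 1 := by
  unfold csf
  rw [h]
  rcases Nat.eq_zero_or_pos R with h0 | h0
  · subst h0
    rw [show q * T + 0 + q - 1 = q * T + (q - 1) from by omega, Nat.mul_add_div hq,
      Nat.div_eq_of_lt (by omega)]
    simp
  · rw [show q * T + R + q - 1 = q * T + (R + q - 1) from by omega, Nat.mul_add_div hq,
      Nat.div_eq_of_lt_le (k := 1) (by omega) (by omega), if_neg (by omega)]

lemma cs_succ {q s : ℕ} (hq : 0 < q) (hs1 : 1 ≤ s) (hsq : s < q) (v : ℕ) :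
    csf q s (v + 1) = csf q s v + cbit q s v := by
  have hd := Nat.div_add_mod (v * s) q
  set k := v * s / q with hk
  set z := v * s % q with hz
  have hzq : z < q := Nat.mod_lt _ hq
  have h1 : csf q s v = k + if z = 0 then 0 else 1 := cs_eval hq (by omega) hzq
  have hvs : (v + 1) * s = v * s + s := by ring
  rcases lt_or_ge (z + s) q with hlt | hge
  · have h2 : csf q s (v+1) = k + if z + s = 0 then 0 else 1 :=
      cs_eval hq (x := v+1) (by omega) hlt
    rw [h1, h2]
    unfold cbit
    rw [← hz]
    split_ifs <;> omega
  · have hqk : q * (k + 1) = q * k + q := by ring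
    have h2 : csf q s (v+1) = (k + 1) + if z + s - q = 0 then 0 else 1 :=
      cs_eval hq (x := v+1) (by omega) (by omega)
    rw [h1, h2]
    unfold cbit
    rw [← hz]
    split_ifs <;> omega

lemma cbit_congr {q s x y : ℕ} (h : x % q = y % q) : cbit q s x = cbit q s y := by
  unfold cbit
  rw [Nat.mul_mod x s q, Nat.mul_mod y s q, h]

lemma cs_telescope {q s : ℕ} (hq : 0 < q) (hs1 : 1 ≤ s) (hsq : s < q) (k : ℕ) :
    ∀ l, csf q s (k + l) = csf q s k + ∑ w ∈ Finset.range l, cbit q s (k + w)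
  | 0 => by simp
  | l+1 => by
    rw [Finset.sum_range_succ, show k + (l+1) = (k + l) + 1 from by omega,
      cs_succ hq hs1 hsq, cs_telescope hq hs1 hsq k l]
    omega

lemma st_le_iff {p q : ℕ} (hq : 0 < q) (v i : ℕ) : stf p q v ≤ i ↔ v * p ≤ i * q := by
  unfold stf
  rw [Nat.div_le_iff_le_mul_add_pred hq]
  have : q * i = i * q := mul_comm _ _
  omega

lemma st_mono {p q : ℕ} (hq : 0 < q) {v w : ℕ} (h : v ≤ w) : stf p q v ≤ stf p q w := by
  have := Nat.mul_le_mul_right p h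
  exact Nat.div_le_div_right (by omega)

lemma st_zero {p q : ℕ} (hq : 0 < q) : stf p q 0 = 0 := by
  unfold stf
  rw [Nat.zero_mul, Nat.zero_add, Nat.div_eq_of_lt (by omega)]

lemma st_top {p q : ℕ} (hq : 0 < q) : stf p q (2*q) = 2*p := by
  unfold stf
  have h : 2*q*p = q*(2*p) := by ring
  rw [show 2*q*p + q - 1 = q*(2*p) + (q-1) from by omega, Nat.mul_add_div hq,
    Nat.div_eq_of_lt (by omega)]
  omega

lemma st_fiber {p q : ℕ} (hp : 0 < p) (hq : 0 < q) {v i : ℕ}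
    (h1 : stf p q v ≤ i) (h2 : i < stf p q (v+1)) : i * q / p = v := by
  have ha : v * p ≤ i * q := (st_le_iff hq v i).mp h1
  have hb : ¬ ((v+1) * p ≤ i * q) := fun hc => absurd ((st_le_iff hq (v+1) i).mpr hc) (by omega)
  exact Nat.div_eq_of_lt_le ha (by omega)

lemma st_strict {p q : ℕ} (hq : 0 < q) (hqp : q ≤ p) (v : ℕ) : stf p q v < stf p q (v+1) := by
  by_contra h
  push_neg at h
  have h2 : (v+1) * p ≤ stf p q v * q := (st_le_iff hq (v+1) (stf p q v)).mp h
  have h3 : stf p q v * q ≤ v * p + q - 1 := by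
    have := Nat.div_mul_le_self (v * p + q - 1) q
    exact this
  have h4 : (v+1) * p = v * p + p := by ring
  omega

lemma dfn_pos {p q : ℕ} (hq : 0 < q) (hqp : q ≤ p) (v : ℕ) : 0 < dfn p q v := by
  have := st_strict hq hqp (p := p) v
  unfold dfn
  omega

lemma st_add_dfn {p q : ℕ} (hq : 0 < q) (v : ℕ) : stf p q v + dfn p q v = stf p q (v+1) := by
  have := st_mono (p := p) hq (show v ≤ v + 1 by omega)
  unfold dfn
  omega

section C2
variable {p q s m1 : ℕ}

lemma dfn_eq (hq : 0 < q) (hs1 : 1 ≤ s) (hsq : s < q) (hpe : p = m1 * q + s) (v : ℕ) :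
    dfn p q v = m1 + cbit q s v := by
  have hst : ∀ w, stf p q w = w * m1 + csf q s w := by
    intro w
    unfold stf csf
    have h1 : w * p = q * (w * m1) + w * s := by rw [hpe]; ring
    rw [show w * p + q - 1 = q * (w * m1) + (w * s + q - 1) from by omega, Nat.mul_add_div hq]
  have h2 := cs_succ hq hs1 hsq v
  have h3 : (v+1) * m1 = v * m1 + m1 := by ring
  unfold dfn
  rw [hst, hst]
  omega

lemma cbit_reflect (hq : 0 < q) (hs1 : 1 ≤ s) (hsq : s < q) {b : ℕ}
    (hb : b * s % q = 1) {x y : ℕ} (hx : x < q) (hy : y < q)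
    (hxy : (x + y + 1) % q = b % q) : cbit q s x = cbit q s y := by
  have hq2 : 2 ≤ q := by omega
  have hzxq : x * s % q < q := Nat.mod_lt _ hq
  have hzyq : y * s % q < q := Nat.mod_lt _ hq
  have e1 : (x + y + 1) * s = x * s + y * s + s := by ring
  have e2 : ((x + y + 1) * s) % q = 1 := by
    have h := Nat.ModEq.mul_right s (show x + y + 1 ≡ b [MOD q] from hxy)
    unfold Nat.ModEq at h
    omega
  rw [e1] at e2
  have e3 : (x * s % q + y * s % q + s) % q = 1 := by
    have h := ((Nat.mod_modEq (x*s) q).add (Nat.mod_modEq (y*s) q)).add_right s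
    unfold Nat.ModEq at h
    omega
  obtain ⟨t, ht1, ht2⟩ : ∃ t, x * s % q + y * s % q + s = q * t + 1 ∧ t < 3 := by
    refine ⟨(x * s % q + y * s % q + s) / q, ?_, ?_⟩
    · have := Nat.div_add_mod (x * s % q + y * s % q + s) q
      omega
    · rw [Nat.div_lt_iff_lt_mul hq]
      omega
  interval_cases t <;> (unfold cbit; split_ifs <;> omega)

lemma occA (hq : 0 < q) (hs1 : 1 ≤ s) (hsq : s < q) (hco : Nat.gcd q s = 1) {b : ℕ}
    (hb : b * s % q = 1) {k : ℕ}
    (h : ∀ u < b, cbit q s (k + u) = cbit q s (0 + u)) : k % q = 0 := by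
  have t1 := cs_telescope hq hs1 hsq k b
  have t2 := cs_telescope hq hs1 hsq 0 b
  have hsum2 : ∑ w ∈ Finset.range b, cbit q s (k + w) = ∑ w ∈ Finset.range b, cbit q s (0 + w) :=
    Finset.sum_congr rfl (fun u hu => h u (Finset.mem_range.mp hu))
  rw [hsum2] at t1
  obtain ⟨M, hMd⟩ : ∃ M, b * s = q * M + 1 := by
    refine ⟨b * s / q, ?_⟩
    have := Nat.div_add_mod (b * s) q
    omega
  obtain ⟨K, z, hKd, hzq, hzm⟩ : ∃ K z, k * s = q * K + z ∧ z < q ∧ k * s % q = z :=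
    ⟨k * s / q, k * s % q, (Nat.div_add_mod _ _).symm, Nat.mod_lt _ hq, rfl⟩
  have hcsb : csf q s (0 + b) = M + 1 := by
    rw [Nat.zero_add, cs_eval hq (x := b) hMd (by omega)]
    simp
  have hcs0 : csf q s 0 = 0 := by
    rw [cs_eval hq (x := 0) (T := 0) (R := 0) (by ring) (by omega)]
    simp
  have hkbs : (k + b) * s = k * s + b * s := by ring
  have hqKM : q * (K + M) = q * K + q * M := Nat.mul_add q K M
  have hqKM1 : q * (K + M + 1) = q * (K + M) + q := Nat.mul_succ q (K + M)
  have hcskb : csf q s (k + b) = K + M + 1 := by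
    rcases lt_or_ge (z + 1) q with hlt | hge
    · have hdec1 : (k + b) * s = q * (K + M) + (z + 1) := by omega
      rw [cs_eval hq (x := k + b) hdec1 hlt]
      simp
    · have hdec2 : (k + b) * s = q * (K + M + 1) + 0 := by omega
      rw [cs_eval hq (x := k + b) hdec2 (by omega)]
      simp
  have hfin : z = 0 := by
    rcases Nat.eq_zero_or_pos z with h0 | h0
    · exact h0
    · have hcsk : csf q s k = K + 1 := by
        rw [cs_eval hq (x := k) hKd hzq, if_neg (by omega)]
      omega
  have hdvd : q ∣ k * s := ⟨K, by omega⟩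
  have hk : q ∣ k := Nat.Coprime.dvd_of_dvd_mul_right hco hdvd
  omega

lemma occB (hq : 0 < q) (hs1 : 1 ≤ s) (hsq : s < q) (hco : Nat.gcd q s = 1) {b : ℕ}
    (hb : b * s % q = 1) (hb1 : 1 ≤ b) (hbq : b < q) {k : ℕ}
    (h : ∀ u < q - b, cbit q s (k + u) = cbit q s (b + u)) : k % q = b % q := by
  have t1 := cs_telescope hq hs1 hsq k (q - b)
  have t2 := cs_telescope hq hs1 hsq b (q - b)
  have hsum2 : ∑ w ∈ Finset.range (q-b), cbit q s (k + w) = ∑ w ∈ Finset.range (q-b), cbit q s (b + w) :=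
    Finset.sum_congr rfl (fun u hu => h u (Finset.mem_range.mp hu))
  rw [hsum2] at t1
  obtain ⟨M, hMd⟩ : ∃ M, b * s = q * M + 1 := by
    refine ⟨b * s / q, ?_⟩
    have := Nat.div_add_mod (b * s) q
    omega
  obtain ⟨K, z, hKd, hzq, hzm⟩ : ∃ K z, k * s = q * K + z ∧ z < q ∧ k * s % q = z :=
    ⟨k * s / q, k * s % q, (Nat.div_add_mod _ _).symm, Nat.mod_lt _ hq, rfl⟩
  have hbs_le : b * s ≤ (q - 1) * s := Nat.mul_le_mul_right s (by omega)
  have hq1s : (q - 1) * s + s = q * s := by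
    rw [← Nat.succ_mul, Nat.succ_eq_add_one, show q - 1 + 1 = q from by omega]
  have hMs : M + 1 ≤ s := by
    by_contra hc
    push_neg at hc
    have : q * s ≤ q * M := Nat.mul_le_mul_left q (by omega)
    omega
  have hcsb : csf q s b = M + 1 := by
    rw [cs_eval hq (x := b) hMd (by omega)]
    simp
  have hcsq : csf q s (b + (q - b)) = s := by
    rw [show b + (q - b) = q from by omega,
      cs_eval hq (x := q) (T := s) (R := 0) (by ring) (by omega)]
    simp
  have hqbs : (q - b) * s + b * s = q * s := by
    rw [← Nat.add_mul, show q - b + b = q from by omega]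
  have hkqb : (k + (q - b)) * s = k * s + (q - b) * s := by ring
  have hsM : q * (s - M - 1) + q * (M + 1) = q * s := by
    rw [← Nat.mul_add, show s - M - 1 + (M + 1) = s from by omega]
  have e3 : q * (M + 1) = q * M + q := Nat.mul_succ q M
  have e1 : q * (K + (s - M - 1)) = q * K + q * (s - M - 1) := Nat.mul_add q K (s - M - 1)
  have e2 : q * (K + (s - M - 1) + 1) = q * (K + (s - M - 1)) + q := Nat.mul_succ q _
  have hzfin : z = 1 := by
    rcases Nat.eq_zero_or_pos z with h0 | h0
    · have hcsk : csf q s k = K := by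
        rw [cs_eval hq (x := k) hKd hzq, if_pos h0]
        omega
      have hdec1 : (k + (q - b)) * s = q * (K + (s - M - 1)) + (q - 1) := by omega
      have hcv : csf q s (k + (q - b)) = K + (s - M - 1) + 1 := by
        rw [cs_eval hq (x := k + (q - b)) hdec1 (by omega), if_neg (by omega)]
      omega
    · have hcsk : csf q s k = K + 1 := by
        rw [cs_eval hq (x := k) hKd hzq, if_neg (by omega)]
      rcases lt_or_ge z 2 with h2 | h2
      · omega
      · have hdec2 : (k + (q - b)) * s = q * (K + (s - M - 1) + 1) + (z - 1) := by omega
        have hcv : csf q s (k + (q - b)) = K + (s - M - 1) + 1 + 1 := by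
          rw [cs_eval hq (x := k + (q - b)) hdec2 (by omega), if_neg (by omega)]
        omega
  have hmeq : k * s ≡ b * s [MOD q] := by
    unfold Nat.ModEq
    omega
  have := Nat.ModEq.cancel_right_of_coprime hco hmeq
  unfold Nat.ModEq at this
  omega
end C2

-- runs machinery
lemma runsAux_replicate (t : Bool) : ∀ (j k : ℕ) (rest : List Bool),
    runsAux t k (List.replicate j t ++ rest) = runsAux t (k + j) rest
  | 0, k, rest => by simp [List.replicate]
  | j+1, k, rest => by
    rw [List.replicate_succ, List.cons_append]
    show (if t = t then runsAux t (k+1) (List.replicate j t ++ rest)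
      else k :: runsAux t 1 (List.replicate j t ++ rest)) = _
    rw [if_pos rfl, runsAux_replicate t j (k+1) rest]
    congr 1
    omega

lemma runsAux_signList : ∀ (L : List ℕ) (t : Bool) (n : ℕ), (∀ x ∈ L, 0 < x) →
    runsAux t n (signList (!t) L) = n :: L
  | [], t, n, _ => by
    show runsAux t n [] = _
    rfl
  | d :: L', t, n, hpos => by
    obtain ⟨d', rfl⟩ : ∃ d', d = d' + 1 := ⟨d - 1, by have := hpos d (by simp); omega⟩
    show runsAux t n (List.replicate (d'+1) (!t) ++ signList (!(!t)) L') = _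
    rw [List.replicate_succ, List.cons_append]
    show (if (!t) = t then runsAux t (n+1) (List.replicate d' (!t) ++ signList (!(!t)) L')
      else n :: runsAux (!t) 1 (List.replicate d' (!t) ++ signList (!(!t)) L')) = _
    rw [if_neg (by simp), runsAux_replicate,
      runsAux_signList L' (!t) (1 + d') (fun x hx => hpos x (by simp [hx])),
      Nat.add_comm 1 d']

lemma Sseq_of_signs (w : Word) (D : List ℕ) (hpos : ∀ x ∈ D, 0 < x)
    (h : w.map Prod.snd = signList true D) (hD : D ≠ []) : Sseq w = D := by
  obtain ⟨d, D', rfl⟩ : ∃ d D', D = d :: D' := by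
    cases D with
    | nil => exact absurd rfl hD
    | cons a l => exact ⟨a, l, rfl⟩
  obtain ⟨d', rfl⟩ : ∃ e, d = e + 1 := ⟨d - 1, by have := hpos d (by simp); omega⟩
  have h2 : w.map Prod.snd = true :: (List.replicate d' true ++ signList (!true) D') := by
    rw [h]
    show List.replicate (d'+1) true ++ signList (!true) D' = _
    rw [List.replicate_succ, List.cons_append]
  unfold Sseq
  rw [h2]
  show runsAux true 1 (List.replicate d' true ++ signList (!true) D') = _
  rw [runsAux_replicate, runsAux_signList D' true (1 + d') (fun x hx => hpos x (by simp [hx])),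
    Nat.add_comm 1 d']

section C4
variable {p q : ℕ}

lemma not_decide_mod2 (v : ℕ) : (!decide (v % 2 = 0)) = decide ((v+1) % 2 = 0) := by
  rcases Nat.mod_two_eq_zero_or_one v with h | h
  · have h2 : (v+1) % 2 = 1 := by omega
    simp [h, h2]
  · have h2 : (v+1) % 2 = 0 := by omega
    simp [h, h2]

lemma blocks (hp : 0 < p) (hq : 0 < q) (hqp : q ≤ p) :
    ∀ n v, v + n = 2*q →
    (List.range' (stf p q v) (2*p - stf p q v)).map (fun i => decide ((i*q/p) % 2 = 0))
      = signList (decide (v % 2 = 0)) ((List.range' v n).map (dfn p q)) := by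
  intro n
  induction n with
  | zero =>
    intro v hv
    rw [show v = 2*q from by omega, st_top hq]
    simp [signList]
  | succ n ih =>
    intro v hv
    have hst1 : stf p q v ≤ stf p q (v+1) := st_mono hq (by omega)
    have hst2 : stf p q (v+1) ≤ 2*p := by
      have := st_mono (p := p) hq (show v + 1 ≤ 2*q from by omega)
      rwa [st_top hq] at this
    have hadd := st_add_dfn (p := p) hq v
    rw [show 2*p - stf p q v = dfn p q v + (2*p - stf p q (v+1)) from by omega]
    have hap := List.range'_append (s := stf p q v) (m := dfn p q v) (n := 2*p - stf p q (v+1)) (step := 1)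
    rw [one_mul, hadd] at hap
    rw [← hap]
    rw [List.map_append]
    rw [List.range'_succ, List.map_cons]
    show _ = List.replicate (dfn p q v) (decide (v % 2 = 0)) ++
      signList (!decide (v % 2 = 0)) (List.map (dfn p q) (List.range' (v+1) n))
    congr 1
    · apply List.eq_replicate_iff.mpr
      constructor
      · simp
      · intro bb hbb
        obtain ⟨i, hi, rfl⟩ := List.mem_map.mp hbb
        obtain ⟨hi1, hi2⟩ := List.mem_range'_1.mp hi
        rw [st_fiber hp hq hi1 (by omega)]
    · rw [not_decide_mod2]
      exact ih (v+1) (by omega)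
end C4

section C5
variable {p q : ℕ}

lemma mirror_div (hp : 0 < p) (hq : 0 < q) (hqp : q ≤ p) (hco : Nat.Coprime q p)
    {i : ℕ} (h1 : 1 ≤ i) (h2 : i < p) :
    (2*p - i)*q/p + i*q/p = 2*q - 1 := by
  have hd := Nat.div_add_mod (i*q) p
  have hR : i*q % p < p := Nat.mod_lt _ hp
  have hR0 : 0 < i*q % p := by
    rcases Nat.eq_zero_or_pos (i*q % p) with h | h
    · exfalso
      have hdvd : p ∣ i*q := by omega
      have : p ∣ i := Nat.Coprime.dvd_of_dvd_mul_right hco.symm hdvd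
      have := Nat.le_of_dvd (by omega) this
      omega
    · exact h
  have hiq : i*q ≤ p*q := Nat.mul_le_mul_right q h2.le
  have hA : i*q/p < q := by
    by_contra hc
    push_neg at hc
    have : p * q ≤ p * (i*q/p) := Nat.mul_le_mul_left p hc
    omega
  set A := i*q/p with hAdef
  have e1 : (2*p - i)*q + i*q = 2*(p*q) := by
    rw [← Nat.add_mul, show 2*p - i + i = 2*p from by omega]
    ring
  have e2 : p*(2*q - A - 1) + p*(A + 1) = p*(2*q) := by
    rw [← Nat.mul_add, show 2*q - A - 1 + (A + 1) = 2*q from by omega]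
  have e2' : p*(A+1) = p*A + p := Nat.mul_succ p A
  have e2'' : p*(2*q) = 2*(p*q) := by ring
  have e3 : (2*p - i)*q = p*(2*q - A - 1) + (p - i*q % p) := by omega
  have e4 : (2*p - i)*q / p = 2*q - A - 1 := by
    rw [e3, Nat.mul_add_div hp, Nat.div_eq_of_lt (by omega)]
    omega
  rw [e4]
  omega

lemma mirror_bool (hp : 0 < p) (hq : 0 < q) (hqp : q ≤ p) (hco : Nat.Coprime q p)
    {i : ℕ} (h1 : 1 ≤ i) (h2 : i < p) :
    decide (((2*p - i)*q/p) % 2 = 0) = !decide ((i*q/p) % 2 = 0) := by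
  have h := mirror_div hp hq hqp hco h1 h2
  rcases Nat.mod_two_eq_zero_or_one (i*q/p) with h2' | h2'
  · have h3 : ((2*p - i)*q/p) % 2 = 1 := by omega
    simp [h2', h3]
  · have h3 : ((2*p - i)*q/p) % 2 = 0 := by omega
    simp [h2', h3]

lemma rev_map_range {α : Type} (f : ℕ → α) (n : ℕ) :
    (List.map f (List.range n)).reverse = List.map (fun x => f (n - 1 - x)) (List.range n) := by
  rw [← List.map_reverse]
  conv_lhs => rw [List.range_eq_range', List.reverse_range']
  rw [List.map_map]
  apply List.map_congr_left
  intro a _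
  simp only [Function.comp]
  congr 1
  omega

lemma uList_signs (hp : 0 < p) (hq : 0 < q) (hqp : q ≤ p) (hco : Nat.Coprime q p) :
    (uList p q).map Prod.snd
      = (List.range (2*p)).map (fun i => decide ((i*q/p) % 2 = 0)) := by
  have h1 : List.range (2*p)
      = List.range (1 + (p-1)) ++ List.map (fun x => (1 + (p-1)) + x) (List.range (1 + (p-1))) := by
    rw [← List.range_add]
    congr 1
    omega
  have h2 : List.range (1 + (p-1)) = 0 :: List.map (fun x => 1 + x) (List.range (p-1)) := by
    rw [List.range_add, show List.range 1 = [0] from by simp [List.range_succ]]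
    rfl
  rw [h1, h2]
  simp only [List.map_append, List.map_cons, List.map_map, List.cons_append, List.map_nil]
  unfold uList
  simp only [List.map_cons, List.map_append, List.append_assoc, List.singleton_append,
    List.cons_append]
  congr 1
  · simp
  congr 1
  · -- hat part
    unfold hatList
    rw [List.map_map]
    apply List.map_congr_left
    intro j hj
    simp only [Function.comp]
    simp only [Nat.add_comm 1 j]
  -- middle + inverse: goal is cons = cons (mid singleton list)
  have hmid : (List.map Prod.snd
      (if p % 2 = 1 then [((1 : Fin 2), decide (q % 2 = 0))] else [((0 : Fin 2), false)]))
      = [decide ((p*q/p) % 2 = 0)] := by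
    have hpq : p*q/p = q := Nat.mul_div_cancel_left q hp
    split_ifs with hpar
    · simp [hpq]
    · have hqodd : q % 2 = 1 := by
        rcases Nat.mod_two_eq_zero_or_one q with h | h
        · exfalso
          have h2 : 2 ∣ q := by omega
          have h3 : 2 ∣ p := by omega
          have := Nat.dvd_gcd h2 h3
          rw [hco] at this
          omega
        · exact h
      simp [hpq, hqodd]
  rw [hmid, List.singleton_append]
  congr 1
  · simp only [show 1 + (p-1) + 0 = p from by omega]
  · -- inverse hat part
    unfold invWord hatList
    rw [List.map_map, rev_map_range, List.map_map]
    apply List.map_congr_left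
    intro j hj
    rw [List.mem_range] at hj
    simp only [Function.comp]
    have h1' : 1 ≤ p - 1 - 1 - j + 1 := by omega
    have h2' : p - 1 - 1 - j + 1 < p := by omega
    have hee : 1 + (p-1) + (1 + j) = 2*p - (p - 1 - 1 - j + 1) := by omega
    simp only [hee]
    rw [mirror_bool hp hq hqp hco h1' h2']
end C5

section C6
variable {p q : ℕ}

lemma signs_eq_signList (hp : 0 < p) (hq : 0 < q) (hqp : q ≤ p) (hco : Nat.Coprime q p) :
    (uList p q).map Prod.snd = signList true ((List.range (2*q)).map (dfn p q)) := by
  rw [uList_signs hp hq hqp hco]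
  have h := blocks hp hq hqp (2*q) 0 (by omega)
  rw [st_zero hq, Nat.sub_zero] at h
  rw [List.range_eq_range', h]
  norm_num
  rw [← List.range_eq_range']

lemma Sseq_uList (hp : 0 < p) (hq : 0 < q) (hqp : q ≤ p) (hco : Nat.Coprime q p) :
    Sseq (uList p q) = (List.range (2*q)).map (dfn p q) := by
  refine Sseq_of_signs _ _ ?_ (signs_eq_signList hp hq hqp hco) ?_
  · intro x hx
    obtain ⟨v, hv, rfl⟩ := List.mem_map.mp hx
    exact dfn_pos hq hqp v
  · intro hc
    have : (2*q) = 0 := by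
      have := congrArg List.length hc
      simpa using this
    omega

lemma lastSign_false (hp : 0 < p) (hq : 0 < q) (hqp : q ≤ p) (hco : Nat.Coprime q p) :
    ((uList p q).map Prod.snd).getLast? = some false := by
  rw [uList_signs hp hq hqp hco,
    show 2*p = (2*p - 1) + 1 from by omega, List.range_succ, List.map_append]
  rw [List.map_cons, List.map_nil, List.getLast?_concat]
  congr 1
  -- decide ((2*p-1)*q/p % 2 = 0) = false
  rcases Nat.lt_or_ge p 2 with h1 | h2
  · have hp1 : p = 1 := by omega
    have hq1 : q = 1 := by omega
    subst hp1; subst hq1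
    rfl
  · have hqlt : q < p := by
      rcases Nat.lt_or_ge q p with h | h
      · exact h
      · exfalso
        have hqq : q = p := by omega
        have := hco
        unfold Nat.Coprime at this
        rw [hqq, Nat.gcd_self] at this
        omega
    have hmd := mirror_div hp hq hqp hco (i := 1) (by omega) (by omega)
    rw [Nat.one_mul, Nat.div_eq_of_lt hqlt] at hmd
    rw [show 2*p - 1 = 2*p - 1 from rfl]
    have : (2*p - 1)*q/p = 2*q - 1 := by omega
    rw [this]
    simp
    omega

lemma boundary_uList (hp : 0 < p) (hq : 0 < q) (hqp : q ≤ p) (hco : Nat.Coprime q p) :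
    StartsAtBoundary (uList p q) := by
  right
  intro x hx y hy
  have hhead : (uList p q).head? = some ((0 : Fin 2), true) := rfl
  rw [hhead] at hx
  simp only [Option.mem_def, Option.some.injEq] at hx
  have hlast := lastSign_false hp hq hqp hco
  rw [List.getLast?_map] at hlast
  simp only [Option.mem_def] at hy
  rw [hy] at hlast
  simp only [Option.map_some, Option.some.injEq] at hlast
  rw [← hx, hlast]
  simp
end C6

section C7
variable {p q s m1 : ℕ}

lemma cbit_mod2q (hq : 0 < q) (x : ℕ) : cbit q s (x % (2*q)) = cbit q s x :=
  cbit_congr (by rw [Nat.mod_mod_of_dvd x ⟨2, by ring⟩])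

lemma occ_iff (hp : 0 < p) (hq : 0 < q) (hqp : q ≤ p) (hs1 : 1 ≤ s) (hsq : s < q)
    (hpe : p = m1 * q + s) {base n : ℕ} (hn2 : n ≤ 2*q) (k : ℕ) :
    (((List.range' base n).map (dfn p q)).isPrefixOf
        (((List.range (2*q)).map (dfn p q)).rotate k) = true)
      ↔ ∀ u < n, cbit q s (k + u) = cbit q s (base + u) := by
  have hlenD : ((List.range (2*q)).map (dfn p q)).length = 2*q := by simp
  have hlenP : ((List.range' base n).map (dfn p q)).length = n := by simp
  rw [List.isPrefixOf_iff_prefix, List.prefix_iff_eq_take]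
  constructor
  · intro heq u hu
    have hu2 : u < ((List.range' base n).map (dfn p q)).length := by omega
    have h1 : ((List.range' base n).map (dfn p q))[u] = dfn p q (base + u) := by
      rw [List.getElem_map, List.getElem_range']
      norm_num
    have h2 := congrArg (fun l => l[u]?) heq
    have hu3 : u < (List.take ((List.range' base n).map (dfn p q)).length
        (((List.range (2*q)).map (dfn p q)).rotate k)).length := by
      rw [List.length_take, List.length_rotate, hlenD, hlenP]
      omega
    rw [List.getElem?_eq_getElem hu2, List.getElem?_eq_getElem hu3] at h2
    have h3 := Option.some.inj h2
    rw [h1, List.getElem_take, List.getElem_rotate] at h3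
    simp only [hlenD, List.getElem_map, List.getElem_range] at h3
    have h4 : dfn p q ((u + k) % (2*q)) = dfn p q (k + u) := by
      rw [dfn_eq hq hs1 hsq hpe, dfn_eq hq hs1 hsq hpe,
        show (u + k) = (k + u) from by omega, cbit_mod2q hq]
    rw [h4, dfn_eq hq hs1 hsq hpe, dfn_eq hq hs1 hsq hpe] at h3
    omega
  · intro hcb
    apply List.ext_getElem
    · rw [List.length_take, List.length_rotate, hlenD, hlenP]
      omega
    · intro u h1 h2
      rw [List.getElem_take, List.getElem_rotate]
      simp only [hlenD, List.getElem_map, List.getElem_range]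
      rw [hlenP] at h1
      rw [List.getElem_range']
      rw [dfn_eq hq hs1 hsq hpe, dfn_eq hq hs1 hsq hpe,
        show (u + k) = (k + u) from by omega, cbit_mod2q hq, hcb u h1]
      norm_num

lemma filter_eq_single : ∀ (n c : ℕ), c < n →
    ((List.range n).filter (fun k => decide (k = c))).length = 1 := by
  intro n
  induction n with
  | zero => omega
  | succ n ih =>
    intro c hc
    rw [List.range_succ, List.filter_append, List.length_append]
    rcases Nat.lt_or_ge c n with h | h
    · rw [ih c h]
      have h0 : (List.filter (fun k => decide (k = c)) [n]) = [] := by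
        rw [List.filter_eq_nil_iff]
        intro a ha
        simp at ha ⊢
        omega
      rw [h0]
      rfl
    · have hcn : c = n := by omega
      subst hcn
      have h1 : (List.range c).filter (fun k => decide (k = c)) = [] := by
        rw [List.filter_eq_nil_iff]
        intro a ha
        rw [List.mem_range] at ha
        simp
        omega
      rw [h1]
      simp [List.filter]

lemma filter_mod_length (hq : 0 < q) (c : ℕ) (hc : c < q) :
    ((List.range (2*q)).filter (fun k => decide (k % q = c))).length = 2 := by
  rw [show 2*q = q + q from by omega, List.range_add, List.filter_append, List.length_append]
  have hA : (List.range q).filter (fun k => decide (k % q = c))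
      = (List.range q).filter (fun k => decide (k = c)) := by
    apply List.filter_congr
    intro k hk
    rw [List.mem_range] at hk
    rw [Nat.mod_eq_of_lt hk]
  have hB : ((List.range q).map (fun x => q + x)).filter (fun k => decide (k % q = c))
      = ((List.range q).filter (fun k => decide (k = c))).map (fun x => q + x) := by
    rw [List.filter_map]
    congr 1
    apply List.filter_congr
    intro k hk
    rw [List.mem_range] at hk
    simp only [Function.comp]
    rw [Nat.add_mod_left, Nat.mod_eq_of_lt hk]
  rw [hA, hB, List.length_map, filter_eq_single q c hc]

lemma count_core (hp : 0 < p) (hq : 0 < q) (hqp : q ≤ p) (hs1 : 1 ≤ s) (hsq : s < q)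
    (hpe : p = m1 * q + s) {base n : ℕ} (hbase : base < q) (hn2 : n ≤ 2*q)
    (hfwd : ∀ k, k < 2*q → (∀ u < n, cbit q s (k + u) = cbit q s (base + u)) → k % q = base) :
    cyclicCount ((List.range' base n).map (dfn p q)) ((List.range (2*q)).map (dfn p q)) = 2 := by
  unfold cyclicCount
  rw [List.length_map, List.length_range]
  have hcg : ∀ k ∈ List.range (2*q),
      (((List.range' base n).map (dfn p q)).isPrefixOf
        (((List.range (2*q)).map (dfn p q)).rotate k)) = decide (k % q = base) := by
    intro k hk
    rw [List.mem_range] at hk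
    have hiff := occ_iff hp hq hqp hs1 hsq hpe hn2 (base := base) k
    by_cases hmod : k % q = base
    · have hcb : ∀ u < n, cbit q s (k + u) = cbit q s (base + u) := by
        intro u hu
        apply cbit_congr
        have hme : k ≡ base [MOD q] := by
          unfold Nat.ModEq
          rw [Nat.mod_eq_of_lt hbase]
          exact hmod
        exact hme.add_right u
      rw [hiff.mpr hcb]
      simp [hmod]
    · have hne : ¬ (((List.range' base n).map (dfn p q)).isPrefixOf
          (((List.range (2*q)).map (dfn p q)).rotate k) = true) := by
        intro hc
        exact hmod (hfwd k hk (hiff.mp hc))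
      simp only [Bool.not_eq_true] at hne
      rw [hne]
      simp [hmod]
  rw [List.filter_congr hcg]
  exact filter_mod_length hq base hbase
end C7

section C8

lemma cf_bounds : ∀ l : List ℕ, (∀ x ∈ l, 0 < x) → 0 ≤ cf l ∧ cf l ≤ 1
  | [], _ => by simp [cf]
  | m :: rest, h => by
    have hm : (1:ℚ) ≤ (m:ℚ) := by exact_mod_cast h m (by simp)
    have ih := cf_bounds rest (fun x hx => h x (by simp [hx]))
    have hden : (1:ℚ) ≤ (m:ℚ) + cf rest := by linarith [ih.1]
    constructor
    · show (0:ℚ) ≤ 1 / ((m:ℚ) + cf rest)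
      positivity
    · show 1 / ((m:ℚ) + cf rest) ≤ 1
      rw [div_le_one (by linarith)]
      linarith

lemma cf_pos : ∀ l : List ℕ, l ≠ [] → (∀ x ∈ l, 0 < x) → 0 < cf l
  | [], h, _ => absurd rfl h
  | m :: rest, _, h => by
    have hm : (1:ℚ) ≤ (m:ℚ) := by exact_mod_cast h m (by simp)
    have ih := cf_bounds rest (fun x hx => h x (by simp [hx]))
    show (0:ℚ) < 1 / ((m:ℚ) + cf rest)
    have : (0:ℚ) < (m:ℚ) + cf rest := by linarith [ih.1]
    positivity

lemma cf_lt_one (ms : List ℕ) (hms : ∀ x ∈ ms, 0 < x)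
    (hlast : ms ≠ [] → ∀ x ∈ ms.getLast?, 2 ≤ x) : cf ms < 1 := by
  cases ms with
  | nil => norm_num [cf]
  | cons m rest =>
    show 1 / ((m:ℚ) + cf rest) < 1
    have hm : (1:ℚ) ≤ (m:ℚ) := by exact_mod_cast hms m (by simp)
    have hb := cf_bounds rest (fun x hx => hms x (by simp [hx]))
    have hgt : (1:ℚ) < (m:ℚ) + cf rest := by
      cases rest with
      | nil =>
        have h2 : 2 ≤ m := by
          have := hlast (by simp) m (by simp [List.getLast?])
          exact this
        have : (2:ℚ) ≤ (m:ℚ) := by exact_mod_cast h2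
        simp [cf]
        linarith
      | cons a t =>
        have hpos : 0 < cf (a :: t) := cf_pos _ (by simp) (fun x hx => hms x (by simp [hx]))
        linarith
    rw [div_lt_one (by linarith)]
    exact hgt

lemma partA (m1 : ℕ) (ms : List ℕ) (hm1 : 0 < m1) (hms : ∀ x ∈ ms, 0 < x)
    (hlast : ms ≠ [] → ∀ x ∈ ms.getLast?, 2 ≤ x) :
    ∃ sv : ℕ,
      0 < (cf (m1 :: ms)).den ∧ 0 < (cf (m1 :: ms)).num.toNat ∧
      (cf (m1 :: ms)).num.toNat ≤ (cf (m1 :: ms)).den ∧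
      Nat.Coprime (cf (m1 :: ms)).num.toNat (cf (m1 :: ms)).den ∧
      (cf (m1 :: ms)).den = m1 * (cf (m1 :: ms)).num.toNat + sv ∧
      sv < (cf (m1 :: ms)).num.toNat ∧
      (ms = [] → sv = 0) ∧ (sv = 0 → (cf (m1 :: ms)).num.toNat = 1) := by
  have hb := cf_bounds ms hms
  have hlt1 := cf_lt_one ms hms hlast
  have hm1' : (1:ℚ) ≤ (m1:ℚ) := by exact_mod_cast hm1
  have hdenpos : (0:ℚ) < (m1:ℚ) + cf ms := by linarith [hb.1]
  have hr : cf (m1 :: ms) = 1 / ((m1:ℚ) + cf ms) := rfl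
  have hrpos : 0 < cf (m1 :: ms) := by rw [hr]; positivity
  set r := cf (m1 :: ms) with hrdef
  have hnum : 0 < r.num := Rat.num_pos.mpr hrpos
  have hp : 0 < r.den := r.pos
  have hq : 0 < r.num.toNat := by omega
  have hco : Nat.Coprime r.num.toNat r.den := by
    have h := r.reduced
    have h2 : r.num.natAbs = r.num.toNat := by omega
    rwa [h2] at h
  have hcast : ((r.num.toNat : ℚ)) = (r.num : ℚ) := by
    have : (r.num.toNat : ℤ) = r.num := Int.toNat_of_nonneg hnum.le
    exact_mod_cast this
  have hkey : (r.num.toNat : ℚ) / (r.den : ℚ) = r := by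
    rw [hcast]
    exact Rat.num_div_den r
  have hpne : ((r.den : ℚ)) ≠ 0 := by positivity
  have hqq : ((r.num.toNat : ℚ)) ≠ 0 := by
    rw [hcast]
    exact_mod_cast hnum.ne'
  have h1 : (r.num.toNat : ℚ) * ((m1:ℚ) + cf ms) = (r.den : ℚ) := by
    have h2 : (r.num.toNat : ℚ) / (r.den : ℚ) = 1 / ((m1:ℚ) + cf ms) := by rw [hkey, hr]
    field_simp at h2
    linarith [h2]
  have h2 : (r.den : ℚ) = (m1 * r.num.toNat : ℕ) + (r.num.toNat : ℚ) * cf ms := by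
    push_cast
    rw [← h1]
    ring
  have hsv0 : (0:ℚ) ≤ (r.num.toNat : ℚ) * cf ms := by
    apply mul_nonneg _ hb.1
    positivity
  have hsvlt : (r.num.toNat : ℚ) * cf ms < (r.num.toNat : ℚ) := by
    have hqpos : (0:ℚ) < (r.num.toNat : ℚ) := by positivity
    calc (r.num.toNat : ℚ) * cf ms < (r.num.toNat : ℚ) * 1 := by
          exact mul_lt_mul_of_pos_left hlt1 hqpos
      _ = _ := by ring
  have hge : m1 * r.num.toNat ≤ r.den := by
    have : ((m1 * r.num.toNat : ℕ) : ℚ) ≤ (r.den : ℚ) := by rw [h2]; linarith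
    exact_mod_cast this
  refine ⟨r.den - m1 * r.num.toNat, hp, hq, ?_, hco, by omega, ?_, ?_, ?_⟩
  · -- q ≤ p
    have h3 := Nat.mul_le_mul_right r.num.toNat (show 1 ≤ m1 from hm1)
    have h4 : m1 * r.num.toNat = r.num.toNat * m1 := Nat.mul_comm _ _
    omega
  · -- sv < q
    have hsv : ((r.den - m1 * r.num.toNat : ℕ) : ℚ) = (r.num.toNat : ℚ) * cf ms := by
      push_cast [hge]
      rw [h2]
      push_cast
      ring
    have : ((r.den - m1 * r.num.toNat : ℕ) : ℚ) < (r.num.toNat : ℚ) := by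
      rw [hsv]
      exact hsvlt
    exact_mod_cast this
  · -- ms = [] → sv = 0
    intro hnil
    have hf0 : cf ms = 0 := by rw [hnil]; rfl
    have hsv : ((r.den - m1 * r.num.toNat : ℕ) : ℚ) = (r.num.toNat : ℚ) * cf ms := by
      push_cast [hge]
      rw [h2]
      push_cast
      ring
    rw [hf0, mul_zero] at hsv
    exact_mod_cast hsv
  · -- sv = 0 → q = 1
    intro hsv0'
    have hsv : ((r.den - m1 * r.num.toNat : ℕ) : ℚ) = (r.num.toNat : ℚ) * cf ms := by
      push_cast [hge]
      rw [h2]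
      push_cast
      ring
    rw [hsv0'] at hsv
    have hf0 : cf ms = 0 := by
      rcases mul_eq_zero.mp hsv.symm with h | h
      · exact absurd h hqq
      · exact h
    have hpd : r.den = m1 * r.num.toNat := by
      have : ((r.den : ℚ)) = ((m1 * r.num.toNat : ℕ) : ℚ) := by
        rw [h2, hf0]
        ring
      exact_mod_cast this
    have hdvd : r.num.toNat ∣ r.den := ⟨m1, by rw [hpd, Nat.mul_comm]⟩
    have := Nat.gcd_eq_left hdvd
    unfold Nat.Coprime at hco
    omega
end C8

lemma range'_map_palindrome (f : ℕ → ℕ) (a n : ℕ)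
    (h : ∀ u, u < n → f (a + u) = f (a + (n - 1 - u))) :
    ((List.range' a n).map f).reverse = (List.range' a n).map f := by
  rw [← List.map_reverse, List.reverse_range', List.map_map]
  conv_rhs => rw [List.range'_eq_map_range]
  rw [List.map_map]
  apply List.map_congr_left
  intro u hu
  rw [List.mem_range] at hu
  simp only [Function.comp]
  rw [show a + n - 1 - u = a + (n - 1 - u) from by omega]
  exact (h u hu).symm

lemma mainCase (p q s m1 : ℕ) (hp : 0 < p) (hq : 0 < q) (hqp : q ≤ p) (hco : Nat.Coprime q p)
    (hm1 : 0 < m1) (hpe : p = m1 * q + s) (hsq : s < q) (hs1 : 1 ≤ s) :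
    ∃ S1 S2 : List ℕ,
      IsSymmDecomp (uList p q) m1 S1 S2 ∧ S1 ≠ [] ∧
      cyclicCount S1 (S1 ++ S2 ++ S1 ++ S2) = 2 ∧
      cyclicCount S2 (S1 ++ S2 ++ S1 ++ S2) = 2 := by
  have hq2 : 2 ≤ q := by omega
  have hcoqs : Nat.gcd q s = 1 := by
    have h := hco
    unfold Nat.Coprime at h
    rw [hpe, show m1 * q + s = s + m1 * q from by ring,
      Nat.gcd_add_mul_right_right q s m1] at h
    exact h
  haveI : NeZero q := ⟨by omega⟩
  haveI : Fact (1 < q) := ⟨by omega⟩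
  have hunit : IsUnit ((s : ZMod q)) := by
    rw [ZMod.isUnit_iff_coprime]
    unfold Nat.Coprime
    rw [Nat.gcd_comm]
    exact hcoqs
  have hmul : (((( (s : ZMod q)⁻¹).val * s : ℕ)) : ZMod q) = 1 := by
    push_cast
    rw [ZMod.natCast_val, ZMod.cast_id]
    exact ZMod.inv_mul_of_unit _ hunit
  set b := ((s : ZMod q)⁻¹).val with hbdef
  have hb : (b * s) % q = 1 := by
    have h1 : (((b * s : ℕ)) : ZMod q).val = (1 : ZMod q).val := by rw [hmul]
    rw [ZMod.val_natCast, ZMod.val_one] at h1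
    exact h1
  have hbq : b < q := ZMod.val_lt _
  have hb1 : 1 ≤ b := by
    rcases Nat.eq_zero_or_pos b with h0 | h0
    · rw [h0] at hb
      norm_num at hb
    · exact h0
  set S1 := (List.range' 0 b).map (dfn p q) with hS1
  set S2 := (List.range' b (q - b)).map (dfn p q) with hS2
  have hper : ∀ a n', (List.range' (q + a) n').map (dfn p q)
      = (List.range' a n').map (dfn p q) := by
    intro a n'
    apply List.ext_getElem
    · simp
    · intro u h1 h2
      simp only [List.getElem_map, List.getElem_range']
      rw [dfn_eq hq hs1 hsq hpe, dfn_eq hq hs1 hsq hpe]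
      congr 1
      apply cbit_congr
      rw [show q + a + 1*u = q + (a + 1*u) from by omega, Nat.add_mod_left]
  have e2 : List.range' (0:ℕ) q = List.range' 0 b ++ List.range' b (q - b) := by
    have h := List.range'_append (s := 0) (m := b) (n := q-b) (step := 1)
    rw [one_mul, Nat.zero_add, show b + (q - b) = q from by omega] at h
    exact h.symm
  have e3 : List.range' q q = List.range' q b ++ List.range' (q + b) (q - b) := by
    have h := List.range'_append (s := q) (m := b) (n := q-b) (step := 1)
    rw [one_mul, show b + (q - b) = q from by omega] at h
    exact h.symm
  have e1 : List.range' (0:ℕ) (2*q) = List.range' 0 q ++ List.range' q q := by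
    have h := List.range'_append (s := 0) (m := q) (n := q) (step := 1)
    rw [one_mul, Nat.zero_add, show q + q = 2*q from by omega] at h
    exact h.symm
  have e4 : (List.range' q b).map (dfn p q) = S1 := by
    have h := hper 0 b
    rw [Nat.add_zero] at h
    rw [h]
  have e5 : (List.range' (q + b) (q - b)).map (dfn p q) = S2 := hper b (q - b)
  have hsplit : (List.range (2*q)).map (dfn p q) = S1 ++ S2 ++ S1 ++ S2 := by
    rw [List.range_eq_range', e1, e2, e3]
    simp only [List.map_append]
    rw [e4, e5]
    simp [List.append_assoc]
    rfl
  have hsseq : Sseq (uList p q) = S1 ++ S2 ++ S1 ++ S2 := by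
    rw [Sseq_uList hp hq hqp hco, hsplit]
  have hpal1 : S1.reverse = S1 := by
    apply range'_map_palindrome
    intro u hu
    rw [dfn_eq hq hs1 hsq hpe, dfn_eq hq hs1 hsq hpe]
    congr 1
    exact cbit_reflect hq hs1 hsq hb (by omega) (by omega)
      (by rw [show 0 + u + (0 + (b - 1 - u)) + 1 = b from by omega])
  have hpal2 : S2.reverse = S2 := by
    apply range'_map_palindrome
    intro u hu
    rw [dfn_eq hq hs1 hsq hpe, dfn_eq hq hs1 hsq hpe]
    congr 1
    refine cbit_reflect hq hs1 hsq hb (by omega) (by omega) ?_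
    rw [show b + u + (b + (q - b - 1 - u)) + 1 = b + q from by omega]
    exact Nat.add_mod_right b q
  have hcb0 : cbit q s 0 = 1 := by
    unfold cbit
    rw [if_pos (Or.inl (by simp))]
  have hcbb : cbit q s b = 0 := by
    unfold cbit
    rw [if_neg (by omega)]
  have hS1head : S1.head? = some (m1 + 1) := by
    rw [hS1, show b = (b-1)+1 from by omega, List.range'_succ, List.map_cons, List.head?_cons,
      dfn_eq hq hs1 hsq hpe, hcb0]
  have hS1last : S1.getLast? = some (m1 + 1) := by
    rw [← List.head?_reverse, hpal1, hS1head]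
  have hS2head : S2.head? = some m1 := by
    rw [hS2, show q - b = (q-b-1)+1 from by omega, List.range'_succ, List.map_cons,
      List.head?_cons, dfn_eq hq hs1 hsq hpe, hcbb]
    norm_num
  have hS2last : S2.getLast? = some m1 := by
    rw [← List.head?_reverse, hpal2, hS2head]
  have hcount1 : cyclicCount S1 (S1 ++ S2 ++ S1 ++ S2) = 2 := by
    rw [← hsplit, hS1]
    apply count_core hp hq hqp hs1 hsq hpe (by omega) (by omega)
    intro k hk hcb
    exact occA hq hs1 hsq hcoqs hb hcb
  have hcount2 : cyclicCount S2 (S1 ++ S2 ++ S1 ++ S2) = 2 := by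
    rw [← hsplit, hS2]
    apply count_core hp hq hqp hs1 hsq hpe hbq (by omega)
    intro k hk hcb
    rw [occB hq hs1 hsq hcoqs hb hb1 hbq hcb]
    exact Nat.mod_eq_of_lt hbq
  refine ⟨S1, S2, ⟨⟨0, ?_, ?_⟩, hpal1, hpal2, ?_, ?_, hS2head, hS2last⟩, ?_, hcount1, hcount2⟩
  · rw [List.rotate_zero]
    exact boundary_uList hp hq hqp hco
  · rw [List.rotate_zero]
    exact hsseq
  · intro x hx
    rw [hS1head] at hx
    simp only [Option.mem_def, Option.some.injEq] at hx
    omega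
  · intro x hx
    rw [hS1last] at hx
    simp only [Option.mem_def, Option.some.injEq] at hx
    omega
  · intro hc
    rw [hc] at hS1head
    simp at hS1head

lemma degenCase (p m1 : ℕ) (hp : 0 < p) (hm1 : 0 < m1) (hpe : p = m1 * 1 + 0)
    (hco : Nat.Coprime 1 p) :
    IsSymmDecomp (uList p 1) m1 [] [m1] ∧
    cyclicCount [m1] ([] ++ [m1] ++ [] ++ [m1]) = 2 := by
  have hst : ∀ v, stf p 1 v = v * p := by
    intro v
    unfold stf
    simp
  have hD : (List.range (2*1)).map (dfn p 1) = [m1, m1] := by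
    rw [show List.range (2*1) = [0, 1] from rfl]
    simp only [List.map_cons, List.map_nil]
    unfold dfn
    rw [hst 0, hst 1, hst 2]
    have h1 : 1 * p - 0 * p = m1 := by omega
    have h2 : 2 * p - 1 * p = m1 := by omega
    rw [h1, h2]
  have hsseq : Sseq (uList p 1) = [m1, m1] := by
    rw [Sseq_uList hp one_pos hp hco]
    exact hD
  have hrot1 : ([m1, m1] : List ℕ).rotate 1 = [m1, m1] := by
    simp [List.rotate]
  have hpre : ([m1] : List ℕ).isPrefixOf [m1, m1] = true := by
    simp [List.isPrefixOf]
  constructor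
  · refine ⟨⟨0, ?_, ?_⟩, rfl, rfl, by simp, by simp, rfl, rfl⟩
    · rw [List.rotate_zero]
      exact boundary_uList hp one_pos hp hco
    · rw [List.rotate_zero]
      simpa using hsseq
  · show cyclicCount [m1] ([] ++ [m1] ++ [] ++ [m1]) = 2
    have hL : ([] ++ [m1] ++ [] ++ [m1] : List ℕ) = [m1, m1] := by simp
    rw [hL]
    unfold cyclicCount
    rw [show ([m1, m1] : List ℕ).length = 2 from rfl,
      show List.range 2 = [0, 1] from rfl]
    simp [List.filter, List.rotate_zero, hrot1, hpre]

/-- The cyclic S-sequence `CS(r)` decomposes as `⟨⟨S₁, S₂, S₁, S₂⟩⟩` with each `Sᵢ`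
a palindrome occurring exactly twice, `S₁` beginning and ending with `m₁+1`
(empty when `k = 1`), and `S₂` beginning and ending with `m₁`. -/
theorem CS_symmetric_decomposition (m1 : ℕ) (ms : List ℕ) (hm1 : 0 < m1)
    (hms : ∀ x ∈ ms, 0 < x) (hlast : ms ≠ [] → ∀ x ∈ ms.getLast?, 2 ≤ x) :
    ∃ S1 S2 : List ℕ,
      IsSymmDecomp (slopeWord (cf (m1 :: ms))) m1 S1 S2 ∧
      (ms = [] → S1 = []) ∧
      (S1 ≠ [] → cyclicCount S1 (S1 ++ S2 ++ S1 ++ S2) = 2) ∧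
      cyclicCount S2 (S1 ++ S2 ++ S1 ++ S2) = 2 := by
  obtain ⟨sv, hp, hq, hqp, hco, hpe, hsvq, hnil, hsv1⟩ := partA m1 ms hm1 hms hlast
  have hw : slopeWord (cf (m1 :: ms))
      = uList (cf (m1 :: ms)).den (cf (m1 :: ms)).num.toNat := rfl
  rcases Nat.eq_zero_or_pos sv with hsv | hsv
  · -- degenerate: q = 1
    have hq1 : (cf (m1 :: ms)).num.toNat = 1 := hsv1 hsv
    rw [hq1] at hco hpe
    obtain ⟨hdec, hcnt⟩ := degenCase (cf (m1 :: ms)).den m1 hp hm1 (by omega) hco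
    refine ⟨[], [m1], ?_, fun _ => rfl, fun hne => absurd rfl hne, hcnt⟩
    rw [hw, hq1]
    exact hdec
  · -- main case
    have hs1 : 1 ≤ sv := hsv
    obtain ⟨S1, S2, hdec, hS1ne, hc1, hc2⟩ :=
      mainCase (cf (m1 :: ms)).den (cf (m1 :: ms)).num.toNat sv m1 hp hq hqp hco hm1 hpe hsvq hs1
    refine ⟨S1, S2, ?_, ?_, fun _ => hc1, hc2⟩
    · rw [hw]
      exact hdec
    · intro hmsnil
      exact absurd (hnil hmsnil) (by omega)
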